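/- Let H be a real inner product space and v_1, …, v_q ∈ H satisfy |⟪v_i, v_j⟫ - δ_{ij}| ≤ ε for all i, j, where 0 ≤ ε < 1/q. If u = ∑_j β_j v_j has ‖u‖ = 1, then 1/(1 + qε) ≤ ∑_j β_j² ≤ 1/(1 - qε). -/
import Mathlib


open RealInnerProductSpace

theorem stmt_6 {H : Type*} [NormedAddCommGroup H] [InnerProductSpace ℝ H]
    (q : ℕ) (hq : 0 < q) (v : Fin q → H)
    (ε : ℝ) (hε0 : 0 ≤ ε) (hε1 : ε < 1 / q)
    (horth : ∀ i j, |⟪v i, v j⟫ - (if i = j then (1:ℝ) else 0)| ≤ ε)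
    (β : Fin q → ℝ)
    (hu : ‖∑ j, β j • v j‖ = 1) :
    1 / (1 + q * ε) ≤ ∑ j, (β j) ^ 2 ∧ ∑ j, (β j) ^ 2 ≤ 1 / (1 - q * ε) := by
  set S := ∑ j, (β j) ^ 2 with hS
  have hqpos : (0:ℝ) < q := by exact_mod_cast hq
  have hqε : (q:ℝ) * ε < 1 := by
    rw [lt_div_iff₀ hqpos] at hε1; linarith
  have hqε0 : (0:ℝ) ≤ (q:ℝ) * ε := by positivity
  have hS0 : 0 ≤ S := Finset.sum_nonneg fun i _ => sq_nonneg _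
  have h1 : (1:ℝ) = ∑ i, ∑ j, β i * β j * ⟪v i, v j⟫ := by
    have := real_inner_self_eq_norm_sq (∑ j, β j • v j)
    rw [hu] at this
    simp only [one_pow] at this
    rw [← this, sum_inner]
    refine Finset.sum_congr rfl fun i _ => ?_
    rw [inner_sum]
    refine Finset.sum_congr rfl fun j _ => ?_
    rw [real_inner_smul_left, real_inner_smul_right]; ring
  have hSdiag : S = ∑ i, ∑ j, β i * β j * (if i = j then (1:ℝ) else 0) := by
    rw [hS]
    refine Finset.sum_congr rfl fun i _ => ?_
    rw [Finset.sum_eq_single i]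
    · simp [sq]
    · intro j _ hj; simp [Ne.symm hj]
    · simp
  have hE : (1:ℝ) - S = ∑ i, ∑ j, β i * β j * (⟪v i, v j⟫ - (if i = j then (1:ℝ) else 0)) := by
    conv_lhs => rw [h1, hSdiag]
    rw [← Finset.sum_sub_distrib]
    refine Finset.sum_congr rfl fun i _ => ?_
    rw [← Finset.sum_sub_distrib]
    refine Finset.sum_congr rfl fun j _ => ?_
    ring
  have habs : |1 - S| ≤ (q:ℝ) * ε * S := by
    rw [hE]
    calc |∑ i, ∑ j, β i * β j * (⟪v i, v j⟫ - (if i = j then (1:ℝ) else 0))|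
        ≤ ∑ i, ∑ j, |β i * β j * (⟪v i, v j⟫ - (if i = j then (1:ℝ) else 0))| := by
          refine (Finset.abs_sum_le_sum_abs _ _).trans ?_
          exact Finset.sum_le_sum fun i _ => Finset.abs_sum_le_sum_abs _ _
      _ ≤ ∑ i, ∑ j, |β i| * |β j| * ε := by
          refine Finset.sum_le_sum fun i _ => Finset.sum_le_sum fun j _ => ?_
          rw [abs_mul, abs_mul]
          exact mul_le_mul_of_nonneg_left (horth i j) (by positivity)
      _ = (∑ i, |β i|) ^ 2 * ε := by
          rw [sq, Finset.sum_mul_sum, Finset.sum_mul]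
          refine Finset.sum_congr rfl fun i _ => ?_
          rw [Finset.sum_mul]
      _ ≤ ((q:ℝ) * S) * ε := by
          refine mul_le_mul_of_nonneg_right ?_ hε0
          have := sq_sum_le_card_mul_sum_sq (s := Finset.univ) (f := fun i => |β i|)
          simpa [sq_abs, hS] using this
      _ = (q:ℝ) * ε * S := by ring
  rw [abs_le] at habs
  constructor
  · rw [div_le_iff₀ (by linarith)]
    nlinarith [habs.2]
  · rw [le_div_iff₀ (by linarith)]
    nlinarith [habs.1]
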